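/- The seven vector fields X¹,…,X⁷ satisfy the commutation relations [X¹,X²] = 2X¹, [X²,X⁴] = −X⁴, [X²,X⁵] = −X⁵, [X³,X⁴] = X⁵, [X³,X⁵] = −X⁴, [X³,X⁶] = 2X⁷, [X³,X⁷] = −2X⁶, [X⁴,X⁵] = 4X¹, [X⁴,X⁶] = −X⁴, [X⁴,X⁷] = −X⁵, [X⁵,X⁶] = X⁵, [X⁵,X⁷] = −X⁴, [X⁶,X⁷] = −2X³, and [Xⁱ,Xʲ] = 0 for every other pair 1 ≤ i < j ≤ 7 (namely (i,j) ∈ {(1,3),(1,4),(1,5),(1,6),(1,7),(2,3),(2,6),(2,7)}). In particular the ℝ-span of X¹,…,X⁷ is a real Lie algebra of vector fields. -/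

import Mathlib

open Complex

noncomputable section

def X1 : ℂ × ℂ × ℂ → ℂ × ℂ × ℂ := fun _ => (0, 0, I)
def X2 : ℂ × ℂ × ℂ → ℂ × ℂ × ℂ := fun p => (p.1, 0, 2 * p.2.2)
def X3 : ℂ × ℂ × ℂ → ℂ × ℂ × ℂ := fun p => (I * p.1, 2 * I * p.2.1, 0)
def X4 : ℂ × ℂ × ℂ → ℂ × ℂ × ℂ := fun p => (p.2.1 - 1, 0, -2 * p.1)
def X5 : ℂ × ℂ × ℂ → ℂ × ℂ × ℂ := fun p => (I + I * p.2.1, 0, -2 * I * p.1)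
def X6 : ℂ × ℂ × ℂ → ℂ × ℂ × ℂ := fun p => (p.1 * p.2.1, p.2.1 ^ 2 - 1, -p.1 ^ 2)
def X7 : ℂ × ℂ × ℂ → ℂ × ℂ × ℂ := fun p => (I * p.1 * p.2.1, I * p.2.1 ^ 2 + I, -I * p.1 ^ 2)

private lemma h1 (p : ℂ × ℂ × ℂ) : HasFDerivAt (fun q : ℂ × ℂ × ℂ => q.1)
    (ContinuousLinearMap.fst ℂ ℂ (ℂ × ℂ)) p := hasFDerivAt_fst

private lemma h21 (p : ℂ × ℂ × ℂ) : HasFDerivAt (fun q : ℂ × ℂ × ℂ => q.2.1)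
    ((ContinuousLinearMap.fst ℂ ℂ ℂ).comp (ContinuousLinearMap.snd ℂ ℂ (ℂ × ℂ))) p :=
  hasFDerivAt_fst.comp p hasFDerivAt_snd

private lemma h22 (p : ℂ × ℂ × ℂ) : HasFDerivAt (fun q : ℂ × ℂ × ℂ => q.2.2)
    ((ContinuousLinearMap.snd ℂ ℂ ℂ).comp (ContinuousLinearMap.snd ℂ ℂ (ℂ × ℂ))) p :=
  hasFDerivAt_snd.comp p hasFDerivAt_snd

private lemma fderiv_X1 (p v : ℂ × ℂ × ℂ) : fderiv ℂ X1 p v = 0 := by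
  rw [(show HasFDerivAt X1 _ p from hasFDerivAt_const (0, 0, I) p).fderiv]
  simp

private lemma fderiv_X2 (p v : ℂ × ℂ × ℂ) : fderiv ℂ X2 p v = (v.1, 0, 2 * v.2.2) := by
  have H := (h1 p).prodMk ((hasFDerivAt_const (0:ℂ) p).prodMk ((h22 p).const_mul (2:ℂ)))
  rw [(show HasFDerivAt X2 _ p from H).fderiv]
  simp [ContinuousLinearMap.prod_apply]

private lemma fderiv_X3 (p v : ℂ × ℂ × ℂ) :
    fderiv ℂ X3 p v = (I * v.1, 2 * I * v.2.1, 0) := by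
  have H := ((h1 p).const_mul I).prodMk (((h21 p).const_mul (2 * I)).prodMk
    (hasFDerivAt_const (0:ℂ) p))
  rw [(show HasFDerivAt X3 _ p from H).fderiv]
  simp [ContinuousLinearMap.prod_apply]

private lemma fderiv_X4 (p v : ℂ × ℂ × ℂ) :
    fderiv ℂ X4 p v = (v.2.1, 0, -2 * v.1) := by
  have H := ((h21 p).sub_const 1).prodMk ((hasFDerivAt_const (0:ℂ) p).prodMk
    ((h1 p).const_mul (-2 : ℂ)))
  rw [(show HasFDerivAt X4 _ p from H).fderiv]
  simp [ContinuousLinearMap.prod_apply]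

private lemma fderiv_X5 (p v : ℂ × ℂ × ℂ) :
    fderiv ℂ X5 p v = (I * v.2.1, 0, -2 * I * v.1) := by
  have H := (((h21 p).const_mul I).const_add I).prodMk ((hasFDerivAt_const (0:ℂ) p).prodMk
    ((h1 p).const_mul (-2 * I)))
  rw [(show HasFDerivAt X5 _ p from H).fderiv]
  simp [ContinuousLinearMap.prod_apply]

private lemma fderiv_X6 (p v : ℂ × ℂ × ℂ) : fderiv ℂ X6 p v =
    (v.1 * p.2.1 + p.1 * v.2.1, 2 * p.2.1 * v.2.1, -(2 * p.1 * v.1)) := by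
  have H := ((h1 p).mul (h21 p)).prodMk
    ((((hasDerivAt_pow 2 p.2.1).comp_hasFDerivAt p (h21 p)).sub_const 1).prodMk
      ((hasDerivAt_pow 2 p.1).comp_hasFDerivAt p (h1 p)).neg)
  rw [(show HasFDerivAt X6 _ p from H).fderiv]
  simp [ContinuousLinearMap.prod_apply]
  ring

private lemma fderiv_X7 (p v : ℂ × ℂ × ℂ) : fderiv ℂ X7 p v =
    (I * v.1 * p.2.1 + I * p.1 * v.2.1, 2 * I * p.2.1 * v.2.1, -(2 * I * p.1 * v.1)) := by
  have H := (((h1 p).const_mul I).mul (h21 p)).prodMk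
    (((((hasDerivAt_pow 2 p.2.1).comp_hasFDerivAt p (h21 p)).const_mul I).add_const I).prodMk
      (((hasDerivAt_pow 2 p.1).comp_hasFDerivAt p (h1 p)).const_mul (-I)))
  rw [(show HasFDerivAt X7 _ p from H).fderiv]
  simp [ContinuousLinearMap.prod_apply]
  ring_nf
  constructorm* _ ∧ _ <;> trivial

/-- The commutator table of the seven vector fields `X¹, …, X⁷`: the thirteen nonzero
brackets together with the eight vanishing ones, so that the `ℝ`-span of `X¹, …, X⁷`
is a real Lie algebra of vector fields on `ℂ³`. -/
theorem Xfield_commutator_table :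
    VectorField.lieBracket ℂ X1 X2 = 2 • X1 ∧
    VectorField.lieBracket ℂ X2 X4 = -X4 ∧
    VectorField.lieBracket ℂ X2 X5 = -X5 ∧
    VectorField.lieBracket ℂ X3 X4 = X5 ∧
    VectorField.lieBracket ℂ X3 X5 = -X4 ∧
    VectorField.lieBracket ℂ X3 X6 = 2 • X7 ∧
    VectorField.lieBracket ℂ X3 X7 = -(2 • X6) ∧
    VectorField.lieBracket ℂ X4 X5 = 4 • X1 ∧
    VectorField.lieBracket ℂ X4 X6 = -X4 ∧
    VectorField.lieBracket ℂ X4 X7 = -X5 ∧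
    VectorField.lieBracket ℂ X5 X6 = X5 ∧
    VectorField.lieBracket ℂ X5 X7 = -X4 ∧
    VectorField.lieBracket ℂ X6 X7 = -(2 • X3) ∧
    VectorField.lieBracket ℂ X1 X3 = 0 ∧
    VectorField.lieBracket ℂ X1 X4 = 0 ∧
    VectorField.lieBracket ℂ X1 X5 = 0 ∧
    VectorField.lieBracket ℂ X1 X6 = 0 ∧
    VectorField.lieBracket ℂ X1 X7 = 0 ∧
    VectorField.lieBracket ℂ X2 X3 = 0 ∧
    VectorField.lieBracket ℂ X2 X6 = 0 ∧
    VectorField.lieBracket ℂ X2 X7 = 0 := by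
  constructorm* _ ∧ _ <;>
  · funext p
    simp only [VectorField.lieBracket, fderiv_X1, fderiv_X2, fderiv_X3, fderiv_X4,
      fderiv_X5, fderiv_X6, fderiv_X7, X1, X2, X3, X4, X5, X6, X7,
      Pi.smul_apply, Pi.neg_apply, Pi.zero_apply, Prod.smul_mk, Prod.neg_mk,
      Prod.mk_sub_mk, Prod.mk.injEq]
    norm_num
    try constructorm* _ ∧ _
    all_goals try ring
    all_goals (try ring_nf); all_goals (try simp [Complex.I_sq]; try ring)
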